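/- Fix k ≥ 0 and suppose ‖γ_ℓ ∇L_{B_ℓ}(β_ℓ)‖_∞ < 1 for all ℓ < k. Then coordinatewise: w_{+,k} ⊙ w_{−,k} = α_k² and w_{+,k}² + w_{−,k}² = 2√(α_k⁴ + β_k²). -/
import Mathlib


open Finset Filter Real

noncomputable section

/-- Dot product on `Fin d → ℝ`. -/
def dotp {d : ℕ} (u v : Fin d → ℝ) : ℝ := ∑ j, u j * v j

/-- Batch loss `L_B(β) = (1/(2|B|)) ∑_{i∈B} (⟨x_i,β⟩ − y_i)²`. -/
def batchLoss {d n : ℕ} (x : Fin n → Fin d → ℝ) (y : Fin n → ℝ)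
    (B : Finset (Fin n)) (β : Fin d → ℝ) : ℝ :=
  (1 / (2 * (B.card : ℝ))) * ∑ i ∈ B, (dotp (x i) β - y i) ^ 2

/-- Gradient of the batch loss. -/
def gradBatch {d n : ℕ} (x : Fin n → Fin d → ℝ) (y : Fin n → ℝ)
    (B : Finset (Fin n)) (β : Fin d → ℝ) : Fin d → ℝ :=
  fun j => (1 / (B.card : ℝ)) * ∑ i ∈ B, (dotp (x i) β - y i) * x i j

/-- SGD on the `(w₊, w₋)` parametrisation of the diagonal linear network. -/
def Witer {d n : ℕ} (x : Fin n → Fin d → ℝ) (y : Fin n → ℝ) (α : Fin d → ℝ)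
    (γ : ℕ → ℝ) (Bk : ℕ → Finset (Fin n)) : ℕ → (Fin d → ℝ) × (Fin d → ℝ)
  | 0 => (α, α)
  | k + 1 =>
      let w := Witer x y α γ Bk k
      let β : Fin d → ℝ := fun j => ((w.1 j) ^ 2 - (w.2 j) ^ 2) / 2
      let g := gradBatch x y (Bk k) β
      (fun j => (1 - γ k * g j) * w.1 j, fun j => (1 + γ k * g j) * w.2 j)

/-- The prediction iterates `β_k = ½(w_{+,k}² − w_{−,k}²)`. -/
def betaIter {d n : ℕ} (x : Fin n → Fin d → ℝ) (y : Fin n → ℝ) (α : Fin d → ℝ)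
    (γ : ℕ → ℝ) (Bk : ℕ → Finset (Fin n)) (k : ℕ) : Fin d → ℝ :=
  fun j => ((Witer x y α γ Bk k).1 j ^ 2 - (Witer x y α γ Bk k).2 j ^ 2) / 2

/-- The stochastic gradient `∇L_{B_k}(β_k)` used at step `k`. -/
def gIter {d n : ℕ} (x : Fin n → Fin d → ℝ) (y : Fin n → ℝ) (α : Fin d → ℝ)
    (γ : ℕ → ℝ) (Bk : ℕ → Finset (Fin n)) (k : ℕ) : Fin d → ℝ :=
  gradBatch x y (Bk k) (betaIter x y α γ Bk k)

def qplus (t : ℝ) : ℝ := -2 * t - Real.log ((1 - t) ^ 2)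

def qminus (t : ℝ) : ℝ := 2 * t - Real.log ((1 + t) ^ 2)

def qfun (t : ℝ) : ℝ := -(1 / 2) * Real.log ((1 - t ^ 2) ^ 2)

/-- `α_{+,k}²` coordinatewise. -/
def alphaPlusSq {d n : ℕ} (x : Fin n → Fin d → ℝ) (y : Fin n → ℝ) (α : Fin d → ℝ)
    (γ : ℕ → ℝ) (Bk : ℕ → Finset (Fin n)) (k : ℕ) : Fin d → ℝ :=
  fun j => (α j) ^ 2 * Real.exp (-(∑ ℓ ∈ Finset.range k, qplus (γ ℓ * gIter x y α γ Bk ℓ j)))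

/-- `α_{−,k}²` coordinatewise. -/
def alphaMinusSq {d n : ℕ} (x : Fin n → Fin d → ℝ) (y : Fin n → ℝ) (α : Fin d → ℝ)
    (γ : ℕ → ℝ) (Bk : ℕ → Finset (Fin n)) (k : ℕ) : Fin d → ℝ :=
  fun j => (α j) ^ 2 * Real.exp (-(∑ ℓ ∈ Finset.range k, qminus (γ ℓ * gIter x y α γ Bk ℓ j)))

/-- `α_k² = α_{+,k} ⊙ α_{−,k}` coordinatewise. -/
def alphaSq {d n : ℕ} (x : Fin n → Fin d → ℝ) (y : Fin n → ℝ) (α : Fin d → ℝ)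
    (γ : ℕ → ℝ) (Bk : ℕ → Finset (Fin n)) (k : ℕ) : Fin d → ℝ :=
  fun j => Real.sqrt (alphaPlusSq x y α γ Bk k j * alphaMinusSq x y α γ Bk k j)

/-- `φ_k = ½ arcsinh((α_{+,k}² − α_{−,k}²)/(2α_k²))`. -/
def phiK {d n : ℕ} (x : Fin n → Fin d → ℝ) (y : Fin n → ℝ) (α : Fin d → ℝ)
    (γ : ℕ → ℝ) (Bk : ℕ → Finset (Fin n)) (k : ℕ) : Fin d → ℝ :=
  fun j => (1 / 2) * Real.arsinh ((alphaPlusSq x y α γ Bk k j - alphaMinusSq x y α γ Bk k j) /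
    (2 * alphaSq x y α γ Bk k j))

/-- Hyperbolic entropy `ψ_a`, expressed in terms of the squared scale `aSq = a²`. -/
def psiSq {d : ℕ} (aSq : Fin d → ℝ) (β : Fin d → ℝ) : ℝ :=
  (1 / 2) * ∑ j, (β j * Real.arsinh (β j / aSq j) - Real.sqrt ((β j) ^ 2 + (aSq j) ^ 2) + aSq j)

/-- The time-varying potential `h_k(β) = ψ_{α_k}(β) − ⟨φ_k, β⟩`. -/
def hK {d n : ℕ} (x : Fin n → Fin d → ℝ) (y : Fin n → ℝ) (α : Fin d → ℝ)
    (γ : ℕ → ℝ) (Bk : ℕ → Finset (Fin n)) (k : ℕ) (β : Fin d → ℝ) : ℝ :=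
  psiSq (alphaSq x y α γ Bk k) β - dotp (phiK x y α γ Bk k) β

/-- The gradient of `h_k`: `∇h_k(β) = ½ arcsinh(β/α_k²) − φ_k` coordinatewise. -/
def gradHK {d n : ℕ} (x : Fin n → Fin d → ℝ) (y : Fin n → ℝ) (α : Fin d → ℝ)
    (γ : ℕ → ℝ) (Bk : ℕ → Finset (Fin n)) (k : ℕ) (β : Fin d → ℝ) : Fin d → ℝ :=
  fun j => (1 / 2) * Real.arsinh (β j / alphaSq x y α γ Bk k j) - phiK x y α γ Bk k j

/-- Bregman divergence of `h_k`. -/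
def DhK {d n : ℕ} (x : Fin n → Fin d → ℝ) (y : Fin n → ℝ) (α : Fin d → ℝ)
    (γ : ℕ → ℝ) (Bk : ℕ → Finset (Fin n)) (k : ℕ) (β β' : Fin d → ℝ) : ℝ :=
  hK x y α γ Bk k β - hK x y α γ Bk k β' -
    dotp (gradHK x y α γ Bk k β') (fun j => β j - β' j)

/-- Euclidean norm on `Fin d → ℝ`. -/
def norm2 {d : ℕ} (v : Fin d → ℝ) : ℝ := Real.sqrt (∑ j, v j ^ 2)

/-- ℓ¹ norm on `Fin d → ℝ`. -/
def l1norm {d : ℕ} (v : Fin d → ℝ) : ℝ := ∑ j, |v j|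

/-- `H_B β = (1/|B|) ∑_{i∈B} ⟨x_i, β⟩ x_i`. -/
def HBop {d n : ℕ} (x : Fin n → Fin d → ℝ) (B : Finset (Fin n)) (β : Fin d → ℝ) : Fin d → ℝ :=
  fun j => (1 / (B.card : ℝ)) * ∑ i ∈ B, dotp (x i) β * x i j


lemma witer_prod_key (d n : ℕ) (x : Fin n → Fin d → ℝ) (y : Fin n → ℝ)
    (α : Fin d → ℝ) (hα : ∀ j, 0 < α j)
    (γ : ℕ → ℝ) (Bk : ℕ → Finset (Fin n))
    (k : ℕ) (hstep : ∀ ℓ, ℓ < k → ∀ j, |γ ℓ * gIter x y α γ Bk ℓ j| < 1) :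
    ∀ j, 0 < (Witer x y α γ Bk k).1 j * (Witer x y α γ Bk k).2 j ∧
      (Witer x y α γ Bk k).1 j * (Witer x y α γ Bk k).2 j = alphaSq x y α γ Bk k j := by
  induction k with
  | zero =>
    intro j
    refine ⟨by simp only [Witer]; exact mul_pos (hα j) (hα j), ?_⟩
    simp only [Witer, alphaSq, alphaPlusSq, alphaMinusSq, Finset.range_zero,
      Finset.sum_empty, neg_zero, Real.exp_zero, mul_one]
    have h : (α j) ^ 2 * (α j) ^ 2 = ((α j) ^ 2) ^ 2 := by ring
    rw [h, Real.sqrt_sq (by positivity)]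
    ring
  | succ k ih =>
    have hstep' : ∀ ℓ, ℓ < k → ∀ j, |γ ℓ * gIter x y α γ Bk ℓ j| < 1 := by
      intro ℓ hℓ j; exact hstep ℓ (Nat.lt_succ_of_lt hℓ) j
    intro j
    obtain ⟨hpos, heq⟩ := ih hstep' j
    set t : ℝ := γ k * gIter x y α γ Bk k j with ht_def
    have ht : |t| < 1 := hstep k (Nat.lt_succ_self k) j
    have ht1 : t < 1 := (abs_lt.mp ht).2
    have ht2 : -1 < t := (abs_lt.mp ht).1
    have hsq : (0:ℝ) < 1 - t ^ 2 := by nlinarith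
    have hW1 : (Witer x y α γ Bk (k + 1)).1 j
        = (1 - γ k * gIter x y α γ Bk k j) * (Witer x y α γ Bk k).1 j := by
      simp only [Witer, gIter, betaIter]; rfl
    have hW2 : (Witer x y α γ Bk (k + 1)).2 j
        = (1 + γ k * gIter x y α γ Bk k j) * (Witer x y α γ Bk k).2 j := by
      simp only [Witer, gIter, betaIter]; rfl
    have hprod : (Witer x y α γ Bk (k + 1)).1 j * (Witer x y α γ Bk (k + 1)).2 j
        = (1 - t ^ 2) * ((Witer x y α γ Bk k).1 j * (Witer x y α γ Bk k).2 j) := by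
      rw [hW1, hW2, ← ht_def]; ring
    have hPnn : (0:ℝ) ≤ alphaPlusSq x y α γ Bk k j * alphaMinusSq x y α γ Bk k j := by
      unfold alphaPlusSq alphaMinusSq; positivity
    have hexp : Real.exp (-(qplus t)) * Real.exp (-(qminus t))
        = (1 - t) ^ 2 * (1 + t) ^ 2 := by
      rw [← Real.exp_add]
      have h1 : (0:ℝ) < (1 - t) ^ 2 := pow_pos (by linarith) 2
      have h2 : (0:ℝ) < (1 + t) ^ 2 := pow_pos (by linarith) 2
      have : -(qplus t) + -(qminus t) = Real.log ((1 - t) ^ 2) + Real.log ((1 + t) ^ 2) := by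
        unfold qplus qminus; ring
      rw [this, Real.exp_add, Real.exp_log h1, Real.exp_log h2]
    have hαnew : alphaSq x y α γ Bk (k + 1) j = (1 - t ^ 2) * alphaSq x y α γ Bk k j := by
      unfold alphaSq alphaPlusSq alphaMinusSq
      simp only [Finset.sum_range_succ, ← ht_def]
      have hre : (α j) ^ 2 * Real.exp (-((∑ ℓ ∈ Finset.range k, qplus (γ ℓ * gIter x y α γ Bk ℓ j)) + qplus t)) *
          ((α j) ^ 2 * Real.exp (-((∑ ℓ ∈ Finset.range k, qminus (γ ℓ * gIter x y α γ Bk ℓ j)) + qminus t)))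
          = (alphaPlusSq x y α γ Bk k j * alphaMinusSq x y α γ Bk k j) *
            ((1 - t) ^ 2 * (1 + t) ^ 2) := by
        rw [← hexp]
        unfold alphaPlusSq alphaMinusSq
        rw [neg_add, neg_add, Real.exp_add, Real.exp_add]
        ring
      rw [hre, Real.sqrt_mul hPnn]
      have h12 : (1 - t) ^ 2 * (1 + t) ^ 2 = (1 - t ^ 2) ^ 2 := by ring
      rw [h12, Real.sqrt_sq hsq.le]
      unfold alphaPlusSq alphaMinusSq
      ring
    refine ⟨?_, ?_⟩
    · rw [hprod]; exact mul_pos hsq hpos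
    · rw [hprod, heq, hαnew]

/-- coordinatewise, `w_{+,k} ⊙ w_{−,k} = α_k²` and
`w_{+,k}² + w_{−,k}² = 2√(α_k⁴ + β_k²)`. -/
theorem stmt14 (d n : ℕ) (x : Fin n → Fin d → ℝ) (y : Fin n → ℝ)
    (α : Fin d → ℝ) (hα : ∀ j, 0 < α j)
    (γ : ℕ → ℝ) (hγ : ∀ k, 0 ≤ γ k)
    (Bk : ℕ → Finset (Fin n)) (hBk : ∀ k, (Bk k).Nonempty)
    (k : ℕ) (hstep : ∀ ℓ, ℓ < k → ∀ j, |γ ℓ * gIter x y α γ Bk ℓ j| < 1) :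
    ∀ j, (Witer x y α γ Bk k).1 j * (Witer x y α γ Bk k).2 j = alphaSq x y α γ Bk k j ∧
      (Witer x y α γ Bk k).1 j ^ 2 + (Witer x y α γ Bk k).2 j ^ 2 =
        2 * Real.sqrt ((alphaSq x y α γ Bk k j) ^ 2 + (betaIter x y α γ Bk k j) ^ 2) := by
  intro j
  obtain ⟨hpos, heq⟩ := witer_prod_key d n x y α hα γ Bk k hstep j
  refine ⟨heq, ?_⟩
  set a := (Witer x y α γ Bk k).1 j
  set b := (Witer x y α γ Bk k).2 j
  have hβ : betaIter x y α γ Bk k j = (a ^ 2 - b ^ 2) / 2 := rfl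
  rw [← heq, hβ]
  have hkey : (a * b) ^ 2 + ((a ^ 2 - b ^ 2) / 2) ^ 2 = ((a ^ 2 + b ^ 2) / 2) ^ 2 := by ring
  rw [hkey, Real.sqrt_sq (by positivity)]
  ring

end
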